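/- arXiv:2108.03525 — 2 statements merged into one kernel-verified Lean document; each statement's English description precedes it below -/
import Mathlib

section
/- Let c > 1, X ≥ 2, Δ = X^{1/4 − c}, and I(t) = ∫_{X/2}^{X} e(t·y^c) dy. Then ∫_{−Δ}^{Δ} |I(t)|² dt ≪ X^{2−c}·log X. -/
open Real Complex MeasureTheory

/-- `e(u) = exp(2πiu)`. -/
noncomputable def e (u : ℝ) : ℂ := Complex.exp (2 * Real.pi * Complex.I * u)

lemma norm_e (r : ℝ) : ‖e r‖ = 1 := by
  rw [e, show (2 * (Real.pi:ℂ) * Complex.I * r) = ((2 * Real.pi * r : ℝ) : ℂ) * Complex.I by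
    push_cast; ring, Complex.norm_exp_ofReal_mul_I]

lemma triv_bound (c X t : ℝ) (hX : 0 ≤ X) :
    ‖∫ y in (X / 2)..X, e (t * y ^ c)‖ ≤ X / 2 := by
  have h := intervalIntegral.norm_integral_le_of_norm_le_const (C := 1) (a := X/2) (b := X)
    (f := fun y => e (t * y ^ c)) (fun x _ => by rw [norm_e])
  have : |X - X/2| = X/2 := by rw [_root_.abs_of_nonneg (by linarith : (0:ℝ) ≤ X - X/2)]; ring
  rw [this] at h; simpa using h

lemma key_bound (c : ℝ) (hc : 1 < c) (X : ℝ) (hX : 2 ≤ X) (t : ℝ) (ht : t ≠ 0) :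
    ‖∫ y in (X / 2)..X, e (t * y ^ c)‖ ≤ 2 ^ c * X ^ (1 - c) / |t| := by
  have hX0 : (0:ℝ) < X := by linarith
  have hc0 : (0:ℝ) < c := by linarith
  have h1X : (1:ℝ) ≤ X / 2 := by linarith
  have hle : X / 2 ≤ X := by linarith
  have ht0 : (0:ℝ) < |t| := abs_pos.2 ht
  have huIcc : Set.uIcc (X/2) X = Set.Icc (X/2) X := Set.uIcc_of_le hle
  have hpos : ∀ y ∈ Set.Icc (X/2) X, (0:ℝ) < y := fun y hy => by
    have := hy.1; linarith
  set K : ℂ := (2 * Real.pi * Complex.I * t * c)⁻¹ with hK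
  have hKne : (2 * (Real.pi:ℂ) * Complex.I * t * c) ≠ 0 := by
    simp only [mul_ne_zero_iff]
    refine ⟨⟨⟨⟨by norm_num, ?_⟩, Complex.I_ne_zero⟩, ?_⟩, ?_⟩
    · exact_mod_cast Real.pi_ne_zero
    · exact_mod_cast ht
    · exact_mod_cast hc0.ne'
  set u : ℝ → ℂ := fun y => K * ((y ^ (1-c) : ℝ) : ℂ) with hu_def
  set u' : ℝ → ℂ := fun y => K * (((1-c) * y ^ (-c) : ℝ) : ℂ) with hu'_def
  set v : ℝ → ℂ := fun y => e (t * y ^ c) with hv_def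
  set v' : ℝ → ℂ := fun y => (2 * Real.pi * Complex.I * ((t * (c * y ^ (c-1)) : ℝ) : ℂ)) * e (t * y ^ c) with hv'_def
  have hu : ∀ y ∈ Set.uIcc (X/2) X, HasDerivAt u (u' y) y := by
    intro y hy
    rw [huIcc] at hy
    have hy0 : (0:ℝ) < y := hpos y hy
    have h := (Real.hasDerivAt_rpow_const (x := y) (p := 1-c) (Or.inl hy0.ne'))
    have h2 : HasDerivAt (fun y : ℝ => ((y ^ (1-c) : ℝ) : ℂ)) (((1-c) * y ^ ((1-c)-1) : ℝ) : ℂ) y :=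
      h.ofReal_comp
    have h3 := h2.const_mul K
    simpa [hu_def, hu'_def, show (1-c)-1 = -c by ring] using h3
  have hv : ∀ y ∈ Set.uIcc (X/2) X, HasDerivAt v (v' y) y := by
    intro y hy
    rw [huIcc] at hy
    have hy0 : (0:ℝ) < y := hpos y hy
    have h1 : HasDerivAt (fun y : ℝ => t * y ^ c) (t * (c * y ^ (c-1))) y :=
      (Real.hasDerivAt_rpow_const (x := y) (p := c) (Or.inl hy0.ne')).const_mul t
    have h2 : HasDerivAt (fun y : ℝ => ((2 * Real.pi * Complex.I) * ((t * y ^ c : ℝ) : ℂ)))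
        ((2 * Real.pi * Complex.I) * ((t * (c * y ^ (c-1)) : ℝ) : ℂ)) y :=
      h1.ofReal_comp.const_mul _
    have h3 := h2.cexp
    have hveq : v = fun y : ℝ => Complex.exp ((2 * Real.pi * Complex.I) * ((t * y ^ c : ℝ) : ℂ)) := by
      funext z; simp [hv_def, e]
    rw [hveq]
    convert h3 using 1
    simp [hv'_def, e]; ring
  have hcontrp : ∀ p : ℝ, ContinuousOn (fun y : ℝ => y ^ p) (Set.Icc (X/2) X) := by
    intro p
    exact ContinuousOn.rpow_const continuousOn_id (fun y hy => Or.inl (hpos y hy).ne')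
  have hu'int : IntervalIntegrable u' volume (X/2) X := by
    apply ContinuousOn.intervalIntegrable
    rw [huIcc]
    exact (continuousOn_const.mul ((Complex.continuous_ofReal.comp_continuousOn
      (continuousOn_const.mul (hcontrp (-c))))))
  have hexp : ContinuousOn (fun y : ℝ => e (t * y ^ c)) (Set.Icc (X/2) X) := by
    apply Complex.continuous_exp.comp_continuousOn
    exact continuousOn_const.mul (Complex.continuous_ofReal.comp_continuousOn
      (continuousOn_const.mul (hcontrp c)))
  have hv'int : IntervalIntegrable v' volume (X/2) X := by
    apply ContinuousOn.intervalIntegrable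
    rw [huIcc]
    exact (continuousOn_const.mul (Complex.continuous_ofReal.comp_continuousOn
      (continuousOn_const.mul (continuousOn_const.mul (hcontrp (c-1)))))).mul hexp
  have ibp := intervalIntegral.integral_mul_deriv_eq_deriv_mul hu hv hu'int hv'int
  have hcancel : Set.EqOn (fun y => u y * v' y) (fun y => e (t * y ^ c)) (Set.uIcc (X/2) X) := by
    intro y hy
    rw [huIcc] at hy
    have hy0 : (0:ℝ) < y := hpos y hy
    have hyy : y ^ (1-c) * y ^ (c-1) = 1 := by
      rw [← Real.rpow_add hy0]; norm_num
    have hyyC : ((y ^ (1-c) : ℝ) : ℂ) * ((y ^ (c-1) : ℝ) : ℂ) = 1 := by exact_mod_cast hyy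
    simp only [hu_def, hv'_def]
    have hone : K * ((y ^ (1-c) : ℝ) : ℂ) * (2 * Real.pi * Complex.I * ((t * (c * y ^ (c-1)) : ℝ) : ℂ)) = 1 := by
      rw [hK]
      push_cast
      calc (2 * (Real.pi:ℂ) * Complex.I * t * c)⁻¹ * ((y ^ (1-c) : ℝ) : ℂ) *
            (2 * Real.pi * Complex.I * ((t:ℂ) * ((c:ℂ) * ((y ^ (c-1) : ℝ) : ℂ))))
          = ((2 * (Real.pi:ℂ) * Complex.I * t * c)⁻¹ * (2 * Real.pi * Complex.I * t * c)) *
            (((y ^ (1-c) : ℝ) : ℂ) * ((y ^ (c-1) : ℝ) : ℂ)) := by ring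
        _ = 1 := by rw [inv_mul_cancel₀ hKne, hyyC, mul_one]
    calc K * ((y ^ (1-c) : ℝ) : ℂ) * ((2 * Real.pi * Complex.I * ((t * (c * y ^ (c-1)) : ℝ) : ℂ)) * e (t * y ^ c))
        = (K * ((y ^ (1-c) : ℝ) : ℂ) * (2 * Real.pi * Complex.I * ((t * (c * y ^ (c-1)) : ℝ) : ℂ))) * e (t * y ^ c) := by ring
      _ = e (t * y ^ c) := by rw [hone, one_mul]
  have heq : (∫ y in (X/2)..X, e (t * y ^ c)) =
      u X * v X - u (X/2) * v (X/2) - ∫ x in (X/2)..X, u' x * v x := by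
    rw [← intervalIntegral.integral_congr hcancel]; exact ibp
  -- norm computations
  have hKval : ‖K‖ = (2 * Real.pi * |t| * c)⁻¹ := by
    rw [hK, norm_inv]
    congr 1
    simp [Complex.norm_real, Real.norm_eq_abs, abs_of_pos Real.pi_pos, abs_of_pos hc0]
  have hKle : ‖K‖ ≤ (2 * |t|)⁻¹ := by
    rw [hKval]
    apply inv_anti₀ (by positivity)
    nlinarith [mul_nonneg (by positivity : (0:ℝ) ≤ 2 * |t|)
      (by nlinarith [Real.pi_gt_three] : (0:ℝ) ≤ Real.pi * c - 1)]
  have hnormu : ∀ y : ℝ, 0 < y → ‖u y * v y‖ = ‖K‖ * y ^ (1-c) := by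
    intro y hy0
    simp only [hu_def, hv_def]
    rw [norm_mul, norm_mul, norm_e, mul_one, Complex.norm_real, Real.norm_eq_abs,
      abs_of_pos (Real.rpow_pos_of_pos hy0 _)]
  have hint : (∫ y in (X/2)..X, y ^ (-c)) = (X ^ (1-c) - (X/2) ^ (1-c)) / (1-c) := by
    rw [integral_rpow (Or.inr ⟨by intro h; rw [neg_eq_iff_eq_neg] at h; linarith [h],
      by rw [huIcc]; rintro ⟨h1, h2⟩; linarith⟩)]
    norm_num [show -c + 1 = 1 - c by ring]
  have hnormint : ‖∫ x in (X/2)..X, u' x * v x‖ ≤ ‖K‖ * ((X/2) ^ (1-c) - X ^ (1-c)) := by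
    have h1 : ‖∫ x in (X/2)..X, u' x * v x‖ ≤ ∫ x in (X/2)..X, ‖u' x * v x‖ :=
      intervalIntegral.norm_integral_le_integral_norm hle
    have h2 : Set.EqOn (fun y => ‖u' y * v y‖) (fun y => (‖K‖ * (c-1)) * y ^ (-c))
        (Set.uIcc (X/2) X) := by
      intro y hy
      rw [huIcc] at hy
      have hy0 : (0:ℝ) < y := hpos y hy
      simp only [hu'_def, hv_def]
      rw [norm_mul, norm_mul, norm_e, mul_one, Complex.norm_real, Real.norm_eq_abs, abs_mul,
        abs_of_pos (Real.rpow_pos_of_pos hy0 _), abs_of_neg (by linarith : 1 - c < 0)]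
      ring
    rw [intervalIntegral.integral_congr h2, intervalIntegral.integral_const_mul, hint] at h1
    have h1c : (1:ℝ) - c ≠ 0 := by intro h; linarith
    have halg : (c-1) * ((X ^ (1-c) - (X/2) ^ (1-c)) / (1-c)) = (X/2) ^ (1-c) - X ^ (1-c) := by
      field_simp
      ring
    calc ‖∫ x in (X/2)..X, u' x * v x‖ ≤ ‖K‖ * (c-1) * ((X ^ (1-c) - (X/2) ^ (1-c)) / (1-c)) := h1
      _ = ‖K‖ * ((c-1) * ((X ^ (1-c) - (X/2) ^ (1-c)) / (1-c))) := by ring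
      _ = ‖K‖ * ((X/2) ^ (1-c) - X ^ (1-c)) := by rw [halg]
  have hA : (0:ℝ) < X ^ (1-c) := Real.rpow_pos_of_pos hX0 _
  have hB : (0:ℝ) < (X/2) ^ (1-c) := Real.rpow_pos_of_pos (by linarith) _
  have htri : ‖∫ y in (X/2)..X, e (t * y ^ c)‖ ≤
      ‖u X * v X‖ + ‖u (X/2) * v (X/2)‖ + ‖∫ x in (X/2)..X, u' x * v x‖ := by
    rw [heq]
    have h1 := norm_sub_le (u X * v X - u (X/2) * v (X/2)) (∫ x in (X/2)..X, u' x * v x)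
    have h2 := norm_sub_le (u X * v X) (u (X/2) * v (X/2))
    linarith
  have hKnn : 0 ≤ ‖K‖ := norm_nonneg _
  have hmain : ‖∫ y in (X/2)..X, e (t * y ^ c)‖ ≤ 2 * ‖K‖ * (X/2) ^ (1-c) := by
    rw [hnormu X hX0, hnormu (X/2) (by linarith)] at htri
    nlinarith [hnormint]
  have hhalf : (X/2) ^ (1-c) ≤ 2 ^ c * X ^ (1-c) := by
    have h2pow : (2:ℝ) ^ c * 2 ^ (1-c) = 2 := by
      rw [← Real.rpow_add two_pos]; norm_num
    rw [Real.div_rpow hX0.le (by norm_num : (0:ℝ) ≤ 2)]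
    rw [div_le_iff₀ (Real.rpow_pos_of_pos two_pos _)]
    calc X ^ (1-c) ≤ 2 * X ^ (1-c) := by linarith
      _ = 2 ^ c * 2 ^ (1-c) * X ^ (1-c) := by rw [h2pow]
      _ = 2 ^ c * X ^ (1-c) * 2 ^ (1-c) := by ring
  calc ‖∫ y in (X/2)..X, e (t * y ^ c)‖ ≤ 2 * ‖K‖ * (X/2) ^ (1-c) := hmain
    _ ≤ 2 * (2 * |t|)⁻¹ * (X/2) ^ (1-c) := by gcongr
    _ = (X/2) ^ (1-c) / |t| := by field_simp
    _ ≤ 2 ^ c * X ^ (1-c) / |t| := by gcongr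

/-- With `Δ = X^{1/4-c}` and `I(t) = ∫_{X/2}^X e(t y^c) dy`,
`∫_{-Δ}^{Δ} |I(t)|² dt ≪ X^{2-c} log X`. -/
theorem integral_I_sq_bound (c : ℝ) (hc : 1 < c) :
    ∃ C > 0, ∀ X : ℝ, 2 ≤ X →
      (∫ t in Set.Icc (-(X ^ ((1 : ℝ) / 4 - c))) (X ^ ((1 : ℝ) / 4 - c)),
          ‖∫ y in (X / 2)..X, e (t * y ^ c)‖ ^ 2) ≤
        C * X ^ (2 - c) * Real.log X := by
  have hlog2 : (0:ℝ) < Real.log 2 := Real.log_pos (by norm_num)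
  refine ⟨(2 * 4 ^ c + 1) / Real.log 2, by positivity, fun X hX => ?_⟩
  have hX0 : (0:ℝ) < X := by linarith
  have hX1 : (1:ℝ) ≤ X := by linarith
  set Δ := X ^ ((1:ℝ)/4 - c) with hΔdef
  set δ := X ^ (-c) with hδdef
  have hδ0 : 0 < δ := Real.rpow_pos_of_pos hX0 _
  have hΔ0 : 0 < Δ := Real.rpow_pos_of_pos hX0 _
  have hδΔ : δ ≤ Δ := Real.rpow_le_rpow_of_exponent_le hX1 (by norm_num)
  set B := (2 ^ c * X ^ (1 - c)) ^ 2 with hBdef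
  have hB0 : 0 < B := by positivity
  set g : ℝ → ℝ := fun t => if |t| ≤ δ then (X/2)^2 else B / t^2 with hgdef
  have hfg : ∀ t : ℝ, ‖∫ y in (X / 2)..X, e (t * y ^ c)‖ ^ 2 ≤ g t := by
    intro t
    by_cases h : |t| ≤ δ
    · rw [hgdef]; simp only [if_pos h]
      have := triv_bound c X t (by linarith)
      have hn : (0:ℝ) ≤ ‖∫ y in (X / 2)..X, e (t * y ^ c)‖ := norm_nonneg _
      nlinarith
    · rw [hgdef]; simp only [if_neg h]
      push_neg at h
      have ht : t ≠ 0 := by intro h0; rw [h0] at h; simp at h; linarith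
      have hkey := key_bound c hc X hX t ht
      have hn : (0:ℝ) ≤ ‖∫ y in (X / 2)..X, e (t * y ^ c)‖ := norm_nonneg _
      have ht0 : (0:ℝ) < |t| := abs_pos.2 ht
      have : ‖∫ y in (X / 2)..X, e (t * y ^ c)‖ ^ 2 ≤ (2 ^ c * X ^ (1-c) / |t|) ^ 2 := by
        apply pow_le_pow_left₀ hn hkey
      calc ‖∫ y in (X / 2)..X, e (t * y ^ c)‖ ^ 2 ≤ (2 ^ c * X ^ (1-c) / |t|) ^ 2 := this
        _ = B / t ^ 2 := by rw [div_pow, _root_.sq_abs]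
  have hgmeas : Measurable g := by
    apply Measurable.ite (measurableSet_le measurable_abs measurable_const) measurable_const
    exact measurable_const.div (measurable_id.pow_const 2)
  have hgbound : ∀ t : ℝ, ‖g t‖ ≤ max ((X/2)^2) (B / δ^2) := by
    intro t
    rw [hgdef]
    by_cases h : |t| ≤ δ
    · simp only [if_pos h]
      rw [Real.norm_eq_abs, _root_.abs_of_nonneg (by positivity)]
      exact le_max_left _ _
    · simp only [if_neg h]
      push_neg at h
      rw [Real.norm_eq_abs, _root_.abs_of_nonneg (by positivity)]
      refine le_trans ?_ (le_max_right _ _)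
      apply div_le_div_of_nonneg_left hB0.le (by positivity)
      calc δ^2 ≤ |t|^2 := by nlinarith [abs_nonneg t]
        _ = t^2 := sq_abs t
  have hgint : IntegrableOn g (Set.Icc (-Δ) Δ) := by
    refine Integrable.mono' (integrable_const (max ((X/2)^2) (B / δ^2)))
      hgmeas.aestronglyMeasurable (ae_of_all _ hgbound)
  have hmono : (∫ t in Set.Icc (-Δ) Δ, ‖∫ y in (X / 2)..X, e (t * y ^ c)‖ ^ 2) ≤
      ∫ t in Set.Icc (-Δ) Δ, g t := by
    apply integral_mono_of_nonneg (ae_of_all _ (fun t => by positivity)) hgint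
      (ae_of_all _ hfg)
  -- split the integral
  have hset : Set.Icc (-Δ) Δ = Set.Ico (-Δ) (-δ) ∪ (Set.Icc (-δ) δ ∪ Set.Ioc δ Δ) := by
    ext x
    simp only [Set.mem_Icc, Set.mem_union, Set.mem_Ico, Set.mem_Ioc]
    constructor
    · rintro ⟨h1, h2⟩
      rcases lt_or_ge x (-δ) with h | h
      · exact Or.inl ⟨h1, h⟩
      · rcases le_or_gt x δ with h' | h'
        · exact Or.inr (Or.inl ⟨h, h'⟩)
        · exact Or.inr (Or.inr ⟨h', h2⟩)
    · rintro (⟨h1, h2⟩ | ⟨h1, h2⟩ | ⟨h1, h2⟩) <;> constructor <;> linarith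
  have hd1 : Disjoint (Set.Ico (-Δ) (-δ)) (Set.Icc (-δ) δ ∪ Set.Ioc δ Δ) := by
    rw [Set.disjoint_left]
    rintro x ⟨h1, h2⟩ (⟨h3, h4⟩ | ⟨h3, h4⟩) <;> linarith
  have hd2 : Disjoint (Set.Icc (-δ) δ) (Set.Ioc δ Δ) := by
    rw [Set.disjoint_left]
    rintro x ⟨h1, h2⟩ ⟨h3, h4⟩; linarith
  have hsub1 : Set.Ico (-Δ) (-δ) ⊆ Set.Icc (-Δ) Δ := fun x ⟨h1, h2⟩ => ⟨h1, by linarith⟩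
  have hsub2 : Set.Icc (-δ) δ ⊆ Set.Icc (-Δ) Δ := fun x ⟨h1, h2⟩ => ⟨by linarith, by linarith⟩
  have hsub3 : Set.Ioc δ Δ ⊆ Set.Icc (-Δ) Δ := fun x ⟨h1, h2⟩ => ⟨by linarith, h2⟩
  have hsplit : (∫ t in Set.Icc (-Δ) Δ, g t) =
      (∫ t in Set.Ico (-Δ) (-δ), g t) + ((∫ t in Set.Icc (-δ) δ, g t) + ∫ t in Set.Ioc δ Δ, g t) := by
    rw [hset, setIntegral_union hd1 ((measurableSet_Icc).union measurableSet_Ioc)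
      (hgint.mono_set hsub1) (hgint.mono_set (Set.union_subset hsub2 hsub3)),
      setIntegral_union hd2 measurableSet_Ioc (hgint.mono_set hsub2)
      (hgint.mono_set hsub3)]
  -- evaluate the pieces
  have habs2 : ∀ t : ℝ, B / t^2 = B * t ^ ((-2:ℝ)) := by
    intro t
    rw [show ((-2:ℝ)) = ((-2:ℤ):ℝ) by norm_num, Real.rpow_intCast, zpow_neg, div_eq_mul_inv]
    norm_num
  have hmid : (∫ t in Set.Icc (-δ) δ, g t) = 2*δ*(X/2)^2 := by
    have heq : ∀ t ∈ Set.Icc (-δ) δ, g t = (X/2)^2 := fun t ht => by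
      rw [hgdef]; exact if_pos (abs_le.2 ⟨ht.1, ht.2⟩)
    rw [setIntegral_congr_fun measurableSet_Icc heq, setIntegral_const, Real.volume_real_Icc_of_le (by linarith),
      smul_eq_mul]
    ring
  have hIoc : (∫ t in Set.Ioc δ Δ, g t) ≤ B * δ⁻¹ := by
    have heq : ∀ t ∈ Set.Ioc δ Δ, g t = B * t ^ ((-2:ℝ)) := fun t ht => by
      rw [hgdef]; simp only
      rw [if_neg (not_le.2 (lt_of_lt_of_le ht.1 (le_abs_self t))), habs2]
    rw [setIntegral_congr_fun measurableSet_Ioc heq, ← intervalIntegral.integral_of_le hδΔ,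
      intervalIntegral.integral_const_mul, integral_rpow (Or.inr ⟨by norm_num,
        by rw [Set.uIcc_of_le hδΔ]; rintro ⟨h1, h2⟩; linarith⟩)]
    rw [show (-2+1:ℝ) = ((-1:ℤ):ℝ) by norm_num, Real.rpow_intCast, Real.rpow_intCast]
    have hΔi : (0:ℝ) ≤ Δ⁻¹ := by positivity
    simp only [zpow_neg_one, Int.cast_neg, Int.cast_one, div_neg, div_one]
    nlinarith [mul_nonneg hB0.le hΔi]
  have hIco : (∫ t in Set.Ico (-Δ) (-δ), g t) ≤ B * δ⁻¹ := by
    have heq : ∀ t ∈ Set.Ico (-Δ) (-δ), g t = B * t ^ ((-2:ℝ)) := fun t ht => by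
      have habs' : δ < |t| := by
        rw [abs_of_neg (by linarith [ht.2] : t < 0)]
        linarith [ht.2]
      rw [hgdef]; simp only
      rw [if_neg (not_le.2 habs'), habs2]
    rw [setIntegral_congr_fun measurableSet_Ico heq, integral_Ico_eq_integral_Ioo,
      ← integral_Ioc_eq_integral_Ioo,
      ← intervalIntegral.integral_of_le (by linarith : -Δ ≤ -δ),
      intervalIntegral.integral_const_mul, integral_rpow (Or.inr ⟨by norm_num,
        by rw [Set.uIcc_of_le (by linarith : -Δ ≤ -δ)]; rintro ⟨h1, h2⟩; linarith⟩)]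
    rw [show (-2+1:ℝ) = ((-1:ℤ):ℝ) by norm_num, Real.rpow_intCast, Real.rpow_intCast]
    have hΔi : (0:ℝ) ≤ Δ⁻¹ := by positivity
    simp only [zpow_neg_one, Int.cast_neg, Int.cast_one, inv_neg, div_neg, div_one]
    nlinarith [mul_nonneg hB0.le hΔi]
  -- arithmetic
  have hδinv : δ⁻¹ = X ^ (c:ℝ) := by
    rw [hδdef, Real.rpow_neg hX0.le, inv_inv]
  have hX2c : (0:ℝ) < X ^ (2-c) := Real.rpow_pos_of_pos hX0 _
  have hBδ : B * δ⁻¹ = 4 ^ c * X ^ (2-c) := by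
    rw [hδinv, hBdef, mul_pow]
    have e1 : ((2:ℝ)^c)^(2:ℕ) = 4^c := by
      rw [← Real.rpow_natCast ((2:ℝ)^c) 2, ← Real.rpow_mul (by norm_num : (0:ℝ) ≤ 2),
        show (4:ℝ) = 2^(2:ℝ) by norm_num [show (2:ℝ) = ((2:ℕ):ℝ) by norm_num, Real.rpow_natCast],
        ← Real.rpow_mul (by norm_num : (0:ℝ) ≤ 2)]
      norm_num
      ring_nf
    have e2 : ((X^(1-c))^(2:ℕ)) * X^(c:ℝ) = X^(2-c) := by
      rw [← Real.rpow_natCast (X^(1-c)) 2, ← Real.rpow_mul hX0.le, ← Real.rpow_add hX0]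
      norm_num
      ring_nf
    rw [mul_assoc, e2, e1]
  have hmid2 : 2*δ*(X/2)^2 ≤ X^(2-c) := by
    have hX2 : X^((2:ℕ):ℝ) = X^(2:ℕ) := Real.rpow_natCast X 2
    have : δ * X^(2:ℕ) = X^(2-c) := by
      rw [hδdef, ← hX2, ← Real.rpow_add hX0]
      norm_num
      ring_nf
    calc 2*δ*(X/2)^2 = (δ * X^(2:ℕ))/2 := by ring
      _ = X^(2-c)/2 := by rw [this]
      _ ≤ X^(2-c) := by linarith
  have hlogX : Real.log 2 ≤ Real.log X := Real.log_le_log (by norm_num) hX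
  calc (∫ t in Set.Icc (-Δ) Δ, ‖∫ y in (X / 2)..X, e (t * y ^ c)‖ ^ 2)
      ≤ ∫ t in Set.Icc (-Δ) Δ, g t := hmono
    _ = (∫ t in Set.Ico (-Δ) (-δ), g t) + ((∫ t in Set.Icc (-δ) δ, g t) + ∫ t in Set.Ioc δ Δ, g t) := hsplit
    _ ≤ B * δ⁻¹ + (2*δ*(X/2)^2 + B * δ⁻¹) := by
        gcongr
        exact le_of_eq hmid
    _ ≤ 4 ^ c * X ^ (2-c) + (X^(2-c) + 4 ^ c * X ^ (2-c)) := by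
        rw [hBδ]; gcongr
    _ = (2 * 4 ^ c + 1) * X ^ (2-c) := by ring
    _ = ((2 * 4 ^ c + 1) / Real.log 2) * X ^ (2-c) * Real.log 2 := by
        field_simp
    _ ≤ ((2 * 4 ^ c + 1) / Real.log 2) * X ^ (2-c) * Real.log X := by
        have h4c : (0:ℝ) < (4:ℝ)^c := Real.rpow_pos_of_pos (by norm_num) c
        gcongr
end

section
/- Let 1 < c < 3, c ≠ 2, X₀ ≥ 2, N₀ = X₀^c, and I₀(t) = ∫_{X₀/2}^{X₀} e(t·y^c) dy. Then Ψ(X₀) = ∫_{−∞}^{∞} I₀(t)²·e(−N₀·t) dt satisfies Ψ(X₀) ≪ X₀^{2−c}. -/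
set_option maxHeartbeats 1000000
open Real Complex MeasureTheory intervalIntegral

lemma e_norm (u : ℝ) : ‖e u‖ = 1 := by
  rw [e, Complex.norm_exp]
  norm_num [Complex.mul_re]

lemma e_deriv (u : ℝ) : HasDerivAt e (2 * Real.pi * Complex.I * e u) u := by
  have hz : HasDerivAt (fun z : ℂ => Complex.exp (2 * Real.pi * Complex.I * z))
      (2 * Real.pi * Complex.I * Complex.exp (2 * Real.pi * Complex.I * (u : ℂ)))
      ((u : ℝ) : ℂ) := by
    have := (Complex.hasDerivAt_exp (2 * Real.pi * Complex.I * (u : ℂ))).comp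
      ((u : ℝ) : ℂ) ((hasDerivAt_id ((u:ℝ):ℂ)).const_mul (2 * Real.pi * Complex.I))
    simpa [Function.comp_def, mul_comm, mul_assoc, mul_left_comm] using this
  exact hz.comp_ofReal

-- derivative of v
lemma v_deriv (c t : ℝ) {y : ℝ} (hy : 0 < y) :
    HasDerivAt (fun y : ℝ => e (t * y ^ c))
      ((((t * (c * y ^ (c - 1))) : ℝ) : ℂ) * (2 * Real.pi * Complex.I * e (t * y ^ c))) y := by
  have h1 : HasDerivAt (fun y : ℝ => t * y ^ c) (t * (c * y ^ (c - 1))) y :=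
    (Real.hasDerivAt_rpow_const (Or.inl hy.ne')).const_mul t
  have := (e_deriv (t * y ^ c)).scomp y h1
  simpa [Function.comp_def, smul_eq_mul, mul_comm, mul_assoc, mul_left_comm] using this

lemma e_cont : Continuous e := by
  unfold e; fun_prop

lemma decay {c : ℝ} (hc : 1 < c) {a b t : ℝ} (ha : 0 < a) (hab : a ≤ b) (ht : t ≠ 0) :
    ‖∫ y in a..b, e (t * y ^ c)‖ ≤ a ^ (1 - c) / (2 * |t|) := by
  have hπ : (0:ℝ) < Real.pi := Real.pi_pos
  have hc0 : (0:ℝ) < c := by linarith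
  have hK : (2 * (Real.pi:ℂ) * Complex.I * t * c) ≠ 0 := by
    simp [Complex.ext_iff, Complex.I_ne_zero, ht, hπ.ne', hc0.ne']
  set k : ℂ := (2 * (Real.pi:ℂ) * Complex.I * t * c)⁻¹ with hk
  set u : ℝ → ℂ := fun y => ((y ^ (1 - c) : ℝ) : ℂ) * k with hu_def
  set u' : ℝ → ℂ := fun y => (((1 - c) * y ^ (-c) : ℝ) : ℂ) * k with hu'_def
  set v : ℝ → ℂ := fun y => e (t * y ^ c) with hv_def
  set v' : ℝ → ℂ := fun y =>
    (((t * (c * y ^ (c - 1))) : ℝ) : ℂ) * (2 * Real.pi * Complex.I * e (t * y ^ c)) with hv'_def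
  have huIcc : Set.uIcc a b = Set.Icc a b := Set.uIcc_of_le hab
  have hpos : ∀ y ∈ Set.uIcc a b, 0 < y := by
    rw [huIcc]; intro y hy; exact lt_of_lt_of_le ha hy.1
  have hu : ∀ y ∈ Set.uIcc a b, HasDerivAt u (u' y) y := by
    intro y hy
    have h := ((Real.hasDerivAt_rpow_const (p := 1 - c)
      (Or.inl (hpos y hy).ne')).ofReal_comp).mul_const k
    have he : (1 - c - 1) = -c := by ring
    simp only [he] at h
    exact h
  have hv : ∀ y ∈ Set.uIcc a b, HasDerivAt v (v' y) y := fun y hy => v_deriv c t (hpos y hy)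
  have hcont_u' : ContinuousOn u' (Set.uIcc a b) := by
    apply ContinuousOn.mul _ continuousOn_const
    apply Complex.continuous_ofReal.comp_continuousOn
    apply ContinuousOn.mul continuousOn_const
    intro y hy
    exact (Real.continuousAt_rpow_const y (-c) (Or.inl (hpos y hy).ne')).continuousWithinAt
  have hcont_v' : ContinuousOn v' (Set.uIcc a b) := by
    apply ContinuousOn.mul _ (continuousOn_const.mul (e_cont.comp (continuous_const.mul (Real.continuous_rpow_const hc0.le))).continuousOn)
    apply Complex.continuous_ofReal.comp_continuousOn
    apply ContinuousOn.mul continuousOn_const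
    apply ContinuousOn.mul continuousOn_const
    intro y hy
    exact (Real.continuousAt_rpow_const y (c-1) (Or.inl (hpos y hy).ne')).continuousWithinAt
  have hiu' : IntervalIntegrable u' volume a b := hcont_u'.intervalIntegrable
  have hiv' : IntervalIntegrable v' volume a b := hcont_v'.intervalIntegrable
  have hIeq : (∫ y in a..b, e (t * y ^ c)) = ∫ y in a..b, u y * v' y := by
    apply intervalIntegral.integral_congr
    intro y hy
    have hy0 := hpos y hy
    have h1 : (y:ℝ)^(1-c) * (t * (c * y^(c-1))) = t * c := by
      have h2 : (y:ℝ)^(1-c) * y^(c-1) = 1 := by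
        rw [← Real.rpow_add hy0]; norm_num
      calc (y:ℝ)^(1-c) * (t * (c * y^(c-1))) = t * c * ((y:ℝ)^(1-c) * y^(c-1)) := by ring
        _ = t * c := by rw [h2]; ring
    have : u y * v' y
        = (((y^(1-c) * (t * (c * y^(c-1)))):ℝ):ℂ) * (k * (2*Real.pi*Complex.I)) * e (t*y^c) := by
      simp only [hu_def, hv'_def]; push_cast; ring
    show e (t * y ^ c) = u y * v' y
    rw [this, h1]
    have : ((t * c : ℝ):ℂ) * (k * (2*Real.pi*Complex.I)) = 1 := by
      have htc : (t:ℂ) ≠ 0 := by exact_mod_cast ht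
      have hcc : (c:ℂ) ≠ 0 := by exact_mod_cast hc0.ne'
      rw [hk]; push_cast; field_simp
    rw [this, one_mul]
  rw [hIeq, intervalIntegral.integral_mul_deriv_eq_deriv_mul hu hv hiu' hiv']
  -- norm computations
  have hknorm : ‖k‖ = (2 * Real.pi * |t| * c)⁻¹ := by
    rw [hk, norm_inv]
    simp [map_mul, Complex.norm_real, abs_of_pos hπ, abs_of_pos hc0]
  have ht0 : (0:ℝ) < |t| := abs_pos.2 ht
  have hxnorm : ∀ y, 0 < y → ‖u y‖ = y ^ (1 - c) * ‖k‖ := by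
    intro y hy0
    rw [hu_def]
    rw [norm_mul, Complex.norm_real, Real.norm_eq_abs, abs_of_pos (Real.rpow_pos_of_pos hy0 _)]
  have hmono : ∀ y ∈ Set.uIcc a b, y ^ (1 - c) ≤ a ^ (1 - c) := by
    intro y hy
    rw [huIcc] at hy
    exact Real.rpow_le_rpow_of_nonpos ha hy.1 (by linarith)
  have hbnd : ∀ y ∈ Set.uIcc a b, ‖u y * v y‖ ≤ a ^ (1 - c) * ‖k‖ := by
    intro y hy
    rw [norm_mul, hv_def, e_norm, mul_one, hxnorm y (hpos y hy)]
    exact mul_le_mul_of_nonneg_right (hmono y hy) (norm_nonneg k)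
  have ha1c : (0:ℝ) < a ^ (1 - c) := Real.rpow_pos_of_pos ha _
  have hb1c : (0:ℝ) ≤ b ^ (1 - c) := (Real.rpow_pos_of_pos (lt_of_lt_of_le ha hab) _).le
  have hnotmem : (0:ℝ) ∉ Set.uIcc a b := by
    rw [huIcc]; intro h; exact absurd h.1 (not_le.2 ha)
  have hint : ‖∫ y in a..b, u' y * v y‖ ≤ a ^ (1 - c) * ‖k‖ := by
    have h1 : ‖∫ y in a..b, u' y * v y‖ ≤ ∫ y in a..b, ‖u' y * v y‖ :=
      intervalIntegral.norm_integral_le_integral_norm hab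
    have h2 : (∫ y in a..b, ‖u' y * v y‖) = ∫ y in a..b, ((c - 1) * ‖k‖) * y ^ (-c) := by
      apply intervalIntegral.integral_congr
      intro y hy
      have hy0 := hpos y hy
      have hrw : u' y * v y = (((1 - c) * y ^ (-c) : ℝ) : ℂ) * k * e (t * y ^ c) := rfl
      show ‖u' y * v y‖ = ((c - 1) * ‖k‖) * y ^ (-c)
      rw [hrw, norm_mul, norm_mul, e_norm, mul_one, Complex.norm_real, Real.norm_eq_abs,
        abs_mul, abs_of_pos (Real.rpow_pos_of_pos hy0 _), abs_of_neg (by linarith : 1 - c < 0)]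
      ring
    have h3 : (∫ y in a..b, y ^ (-c)) = (b ^ (-c + 1) - a ^ (-c + 1)) / (-c + 1) :=
      integral_rpow (Or.inr ⟨by intro h; linarith, hnotmem⟩)
    calc ‖∫ y in a..b, u' y * v y‖ ≤ ∫ y in a..b, ‖u' y * v y‖ := h1
      _ = ((c - 1) * ‖k‖) * ∫ y in a..b, y ^ (-c) := by
          rw [h2, intervalIntegral.integral_const_mul]
      _ = ‖k‖ * (a ^ (1 - c) - b ^ (1 - c)) := by
          rw [h3]
          have hnc : (-c + 1) = (1 - c) := by ring
          rw [hnc]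
          have h1c : (1:ℝ) - c ≠ 0 := by intro h; linarith
          field_simp
          ring
      _ ≤ a ^ (1 - c) * ‖k‖ := by nlinarith [norm_nonneg k]
  have hsum : ‖u b * v b - u a * v a - ∫ y in a..b, u' y * v y‖
      ≤ 3 * (a ^ (1 - c) * ‖k‖) := by
    calc ‖u b * v b - u a * v a - ∫ y in a..b, u' y * v y‖
        ≤ ‖u b * v b - u a * v a‖ + ‖∫ y in a..b, u' y * v y‖ := norm_sub_le _ _
      _ ≤ (‖u b * v b‖ + ‖u a * v a‖) + ‖∫ y in a..b, u' y * v y‖ :=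
          add_le_add_left (norm_sub_le _ _) _
      _ ≤ (a ^ (1 - c) * ‖k‖ + a ^ (1 - c) * ‖k‖) + a ^ (1 - c) * ‖k‖ := by
          exact add_le_add (add_le_add (hbnd b Set.right_mem_uIcc)
            (hbnd a Set.left_mem_uIcc)) hint
      _ = 3 * (a ^ (1 - c) * ‖k‖) := by ring
  refine hsum.trans ?_
  rw [hknorm, div_eq_mul_inv]
  have hpi3 := Real.pi_gt_three
  have hden : (0:ℝ) < 2 * Real.pi * |t| * c := by positivity
  have hden2 : (0:ℝ) < 2 * |t| := by positivity
  have key : 3 * (2 * Real.pi * |t| * c)⁻¹ ≤ (2 * |t|)⁻¹ := by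
    rw [show (3:ℝ) * (2 * Real.pi * |t| * c)⁻¹ = 3 / (2 * Real.pi * |t| * c) by ring,
      show ((2 * |t|):ℝ)⁻¹ = 1 / (2 * |t|) by ring, div_le_div_iff₀ hden hden2]
    have hpc : (0:ℝ) < Real.pi * c - 3 := by nlinarith
    nlinarith [mul_pos ht0 hpc]
  calc 3 * (a ^ (1 - c) * (2 * Real.pi * |t| * c)⁻¹)
      = a ^ (1 - c) * (3 * (2 * Real.pi * |t| * c)⁻¹) := by ring
    _ ≤ a ^ (1 - c) * (2 * |t|)⁻¹ := mul_le_mul_of_nonneg_left key ha1c.le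

/-- With `N₀ = X₀^c` and `I₀(t) = ∫_{X₀/2}^{X₀} e(t y^c) dy`, the singular
integral `Ψ(X₀) = ∫_{-∞}^{∞} I₀(t)² e(-N₀ t) dt` satisfies `Ψ(X₀) ≪ X₀^{2-c}`. -/
theorem singular_integral_bound (c : ℝ) (hc1 : 1 < c) (hc3 : c < 3) (hc2 : c ≠ 2) :
    ∃ C > 0, ∀ X₀ : ℝ, 2 ≤ X₀ →
      ‖∫ t : ℝ, (∫ y in (X₀ / 2)..X₀, e (t * y ^ c)) ^ 2 * e (-(X₀ ^ c) * t)‖ ≤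
        C * X₀ ^ (2 - c) := by
  have hπ : (0:ℝ) < Real.pi := Real.pi_pos
  refine ⟨Real.pi * (1/2 + 2 ^ (2*c-3)), by positivity, ?_⟩
  intro X₀ hX
  have hX0 : (0:ℝ) < X₀ := by linarith
  have hX2 : (0:ℝ) < X₀ / 2 := by linarith
  set I : ℝ → ℂ := fun t => ∫ y in (X₀ / 2)..X₀, e (t * y ^ c) with hI
  set F : ℝ → ℂ := fun t => (I t) ^ 2 * e (-(X₀ ^ c) * t) with hF
  set T : ℝ := X₀ ^ (-c) with hT
  have hTpos : 0 < T := Real.rpow_pos_of_pos hX0 _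
  set M : ℝ := (X₀ / 2) ^ (1 - c) / 2 with hM
  have hMpos : 0 < M := by positivity
  set K : ℝ := 2 * (X₀/2)^2 * T^2 + 2 * M^2 with hK
  have hKpos : 0 < K := by positivity
  -- basic norm identity
  have hFnorm : ∀ t, ‖F t‖ = ‖I t‖^2 := by
    intro t
    rw [hF]
    simp only [norm_mul, e_norm, mul_one, norm_pow]
  -- trivial bound
  have htriv : ∀ t, ‖I t‖ ≤ X₀ / 2 := by
    intro t
    have := intervalIntegral.norm_integral_le_of_norm_le_const
      (C := 1) (f := fun y => e (t * y ^ c)) (a := X₀/2) (b := X₀)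
      (fun y _ => le_of_eq (e_norm _))
    rw [one_mul] at this
    refine this.trans (le_of_eq ?_)
    rw [_root_.abs_of_nonneg (by linarith : (0:ℝ) ≤ X₀ - X₀/2)]
    ring
  -- decay bound
  have hdecay : ∀ t : ℝ, t ≠ 0 → ‖I t‖ ≤ M / |t| := by
    intro t ht
    have := decay hc1 hX2 (by linarith : X₀/2 ≤ X₀) ht
    refine this.trans (le_of_eq ?_)
    rw [hM]
    field_simp
  -- pointwise bound by g
  have hg : ∀ t : ℝ, ‖F t‖ ≤ K / (T^2 + t^2) := by
    intro t
    rw [hFnorm]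
    by_cases htT : |t| ≤ T
    · have h1 : ‖I t‖^2 ≤ (X₀/2)^2 := by
        have := htriv t
        nlinarith [norm_nonneg (I t)]
      refine h1.trans ?_
      rw [le_div_iff₀ (by positivity)]
      have ht2 : t^2 ≤ T^2 := by nlinarith [_root_.sq_abs t, abs_nonneg t]
      nlinarith [sq_nonneg M, sq_nonneg (X₀/2)]
    · push_neg at htT
      have ht0 : t ≠ 0 := by
        intro h; rw [h] at htT; simp at htT; linarith
      have habs : 0 < |t| := abs_pos.2 ht0
      have h1 : ‖I t‖^2 ≤ M^2 / t^2 := by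
        have hd := hdecay t ht0
        have : ‖I t‖^2 ≤ (M/|t|)^2 := by nlinarith [norm_nonneg (I t)]
        refine this.trans (le_of_eq ?_)
        rw [div_pow, _root_.sq_abs]
      refine h1.trans ?_
      rw [div_le_div_iff₀ (by positivity) (by positivity)]
      have ht2 : T^2 ≤ t^2 := by nlinarith [_root_.sq_abs t]
      rw [hK]
      nlinarith [mul_le_mul_of_nonneg_left ht2 (sq_nonneg M),
        mul_nonneg (mul_nonneg (sq_nonneg (X₀/2)) (sq_nonneg T)) (sq_nonneg t)]
  -- the majorant is integrable with integral K/T^2 * (T * π)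
  have hgeq : (fun t : ℝ => K / (T^2 + t^2)) = fun t : ℝ => (K/T^2) * (1 + (t/T)^2)⁻¹ := by
    funext t
    rw [div_pow]
    field_simp
  have hgint : Integrable (fun t : ℝ => K / (T^2 + t^2)) := by
    rw [hgeq]
    exact (integrable_inv_one_add_sq.comp_div hTpos.ne').const_mul _
  have hgval : (∫ t : ℝ, K / (T^2 + t^2)) = K/T^2 * (T * Real.pi) := by
    rw [hgeq, MeasureTheory.integral_const_mul]
    rw [MeasureTheory.Measure.integral_comp_div (fun x : ℝ => (1 + x^2)⁻¹) T]
    rw [integral_univ_inv_one_add_sq, abs_of_pos hTpos, smul_eq_mul]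
  -- put it together
  have hmain : ‖∫ t : ℝ, F t‖ ≤ K/T^2 * (T * Real.pi) := by
    refine (MeasureTheory.norm_integral_le_integral_norm F).trans ?_
    rw [← hgval]
    exact integral_mono_of_nonneg (Filter.Eventually.of_forall fun t => norm_nonneg _)
      hgint (Filter.Eventually.of_forall hg)
  refine hmain.trans (le_of_eq ?_)
  -- final rpow computation
  have hTne : T ≠ 0 := hTpos.ne'
  have hTinv : T⁻¹ = X₀ ^ c := by
    rw [hT, Real.rpow_neg hX0.le, inv_inv]
  have hA : 2*(X₀/2)^2*T = (1/2) * X₀^(2-c) := by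
    have h2 : (X₀:ℝ)^(2:ℕ) * X₀^(-c) = X₀^(2-c) := by
      rw [← Real.rpow_natCast X₀ 2, ← Real.rpow_add hX0]
      congr 1
    calc 2*(X₀/2)^2*T = (1/2) * ((X₀:ℝ)^(2:ℕ) * X₀^(-c)) := by rw [hT]; ring
      _ = (1/2) * X₀^(2-c) := by rw [h2]
  have hM2 : M^2 = X₀^(2-2*c) / 2^(2-2*c) / 4 := by
    have hsq : ((X₀/2)^(1-c))^2 = (X₀/2)^(2-2*c) := by
      rw [sq, ← Real.rpow_add hX2]
      congr 1; ring
    have hdiv : ((X₀/2):ℝ)^(2-2*c) = X₀^(2-2*c) / 2^(2-2*c) :=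
      Real.div_rpow hX0.le (by norm_num : (0:ℝ) ≤ 2) (2-2*c)
    rw [hM, div_pow, hsq, hdiv]
    norm_num
  have hx : X₀^(2-2*c) * X₀^c = X₀^(2-c) := by
    rw [← Real.rpow_add hX0]; congr 1; ring
  have hpow : (2:ℝ)^(2*c-3) * (2 * 2^(2-2*c)) = 1 := by
    have h := Real.rpow_natCast (2:ℝ) 1
    have : (2:ℝ)^(2*c-3) * ((2:ℝ)^(1:ℝ) * 2^(2-2*c)) = 2^(0:ℝ) := by
      rw [← Real.rpow_add (by norm_num : (0:ℝ) < 2), ← Real.rpow_add (by norm_num : (0:ℝ) < 2)]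
      congr 1; ring
    rw [Real.rpow_one, Real.rpow_zero] at this
    exact this
  have h2pos : (0:ℝ) < (2:ℝ)^(2-2*c) := Real.rpow_pos_of_pos (by norm_num) _
  have h2inv : (1:ℝ)/(2*2^(2-2*c)) = 2^(2*c-3) := by
    rw [div_eq_iff (by positivity)]
    linarith [hpow]
  have hB : 2*M^2/T = 2^(2*c-3) * X₀^(2-c) := by
    rw [div_eq_mul_inv, hTinv]
    calc 2*M^2*X₀^c = (X₀^(2-2*c) * X₀^c) * (1/(2*2^(2-2*c))) := by rw [hM2]; ring
      _ = X₀^(2-c) * (1/(2*2^(2-2*c))) := by rw [hx]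
      _ = 2^(2*c-3) * X₀^(2-c) := by rw [h2inv]; ring
  calc K/T^2*(T*Real.pi)
      = Real.pi * (2*(X₀/2)^2*T) + Real.pi * (2*M^2/T) := by rw [hK]; field_simp
    _ = Real.pi*(1/2+2^(2*c-3)) * X₀^(2-c) := by rw [hA, hB]; ring
end
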